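/- Let (Z,d) be a metric space, α ≥ 1, 0 < λ ≤ 1, and let P ⊆ Z be a finite nonempty set. Suppose y₀ ∈ Z and R > 0 satisfy: the ball B(y₀,R) = {z ∈ Z : d(z,y₀) ≤ R} intersects P, and R ≥ 2α·diam(P)/λ. Then P is contained in the concentric ball B(y₀, (1 + λ/(2α))·R), and the cost of this single ball satisfies ((1 + λ/(2α))·R)^α ≤ (1 + λ)·R^α. In particular, any cover of P containing a ball of radius R ≥ 2α·diam(P)/λ that intersects P can be replaced by a single-ball cover of cost at most (1 + λ) times the cost of that one ball. -/

import Mathlib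

/-- Let `(Z,d)` be a metric space, `α ≥ 1`, `0 < λ ≤ 1`, and `P ⊆ Z` a finite
nonempty set.  Suppose `y₀ ∈ Z` and `R > 0` are such that the ball `B(y₀,R)`
intersects `P` and `R ≥ 2α·diam(P)/λ`.  Then `P` is contained in the
concentric ball `B(y₀, (1 + λ/(2α))·R)`, and the cost of this single ball
satisfies `((1 + λ/(2α))·R)^α ≤ (1 + λ)·R^α`.  In particular, any cover of `P`
containing such a ball can be replaced by a single-ball cover of cost at most
`(1 + λ)` times the cost of that one ball. -/
theorem single_ball_replacement
    {Z : Type*} [MetricSpace Z] (α lam : ℝ) (hα : 1 ≤ α)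
    (hlam0 : 0 < lam) (hlam1 : lam ≤ 1)
    (P : Set Z) (hPfin : P.Finite) (hPne : P.Nonempty)
    (y₀ : Z) (R : ℝ) (hR : 0 < R)
    (hmeet : ∃ x ∈ P, dist x y₀ ≤ R)
    (hbig : 2 * α * Metric.diam P / lam ≤ R) :
    P ⊆ Metric.closedBall y₀ ((1 + lam / (2 * α)) * R) ∧
    ((1 + lam / (2 * α)) * R) ^ α ≤ (1 + lam) * R ^ α := by
  have hα0 : (0:ℝ) < α := lt_of_lt_of_le one_pos hα
  have ht0 : 0 < lam / (2 * α) := by positivity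
  have hdiam : Metric.diam P ≤ lam / (2 * α) * R := by
    have h := (div_le_iff₀ hlam0).mp hbig
    rw [div_mul_eq_mul_div, le_div_iff₀ (by positivity : (0:ℝ) < 2 * α)]
    nlinarith
  constructor
  · intro p hp
    obtain ⟨x, hxP, hxB⟩ := hmeet
    have hd : dist p x ≤ Metric.diam P :=
      Metric.dist_le_diam_of_mem hPfin.isBounded hp hxP
    have := dist_triangle p x y₀
    rw [Metric.mem_closedBall]
    nlinarith
  · have key : (1 + lam / (2 * α)) ^ α ≤ 1 + lam := by
      have hpos' : (0:ℝ) < 1 + lam / (2 * α) := by positivity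
      have h1 : (1 + lam / (2 * α)) ^ α = Real.exp (Real.log (1 + lam / (2 * α)) * α) :=
        Real.rpow_def_of_pos hpos' α
      have hlog : Real.log (1 + lam / (2 * α)) ≤ lam / (2 * α) := by
        have := Real.log_le_sub_one_of_pos hpos'
        linarith
      have h2 : Real.log (1 + lam / (2 * α)) * α ≤ lam / 2 := by
        calc Real.log (1 + lam / (2 * α)) * α ≤ lam / (2 * α) * α :=
              mul_le_mul_of_nonneg_right hlog hα0.le
          _ = lam / 2 := by field_simp
      have h3 : Real.exp (Real.log (1 + lam / (2 * α)) * α) ≤ Real.exp (lam / 2) :=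
        Real.exp_le_exp.mpr h2
      have h4 : Real.exp (lam / 2) ≤ 1 + lam := by
        have hb : 1 - lam / 2 ≤ Real.exp (-(lam / 2)) := by
          have := Real.add_one_le_exp (-(lam / 2)); linarith
        have hmul : Real.exp (lam / 2) * Real.exp (-(lam / 2)) = 1 := by
          rw [← Real.exp_add]; simp
        have he : 0 < Real.exp (lam / 2) := Real.exp_pos _
        nlinarith
      rw [h1]; exact h3.trans h4
    have hpos : (0:ℝ) ≤ 1 + lam / (2 * α) := by positivity
    rw [Real.mul_rpow hpos hR.le]
    have hRα : (0:ℝ) ≤ R ^ α := Real.rpow_nonneg hR.le α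
    exact mul_le_mul_of_nonneg_right key hRα
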